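/- (Linear programming bound.) Let G be a connected k-regular finite simple graph on v vertices whose distinct adjacency eigenvalues are λ₁ = k, λ₂, …, λ_n. Suppose f is a real polynomial, written as f(x) = Σ_{i≥0} f_i F_i^{(k)}(x) in the basis of the polynomials F_i^{(k)}, such that f(k) > 0, f(λ_i) ≤ 0 for every i ≥ 2, f₀ > 0, and f_i ≥ 0 for every i ≥ 1. Then v ≤ f(k)/f₀. -/

import Mathlib

open Polynomial

/-- The adjacency matrix of a simple graph over `ℝ` is Hermitian. -/
theorem adjMatrix_isHermitian {V : Type*} [Fintype V] [DecidableEq V]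
    (G : SimpleGraph V) [DecidableRel G.Adj] : (G.adjMatrix ℝ).IsHermitian := by
  rw [Matrix.IsHermitian, Matrix.conjTranspose_eq_transpose_of_trivial]
  exact G.isSymm_adjMatrix

/-- The multiset of adjacency eigenvalues (with multiplicity) of a finite simple graph. -/
noncomputable def eigMultiset {V : Type*} [Fintype V] [DecidableEq V]
    (G : SimpleGraph V) [DecidableRel G.Adj] : Multiset ℝ :=
  Multiset.map (adjMatrix_isHermitian G).eigenvalues Finset.univ.val

/-- The second largest adjacency eigenvalue (with multiplicity) of a finite simple graph:
the second-to-last entry of the nondecreasing sorted list of eigenvalues. -/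
noncomputable def secondEigenvalue {V : Type*} [Fintype V] [DecidableEq V]
    (G : SimpleGraph V) [DecidableRel G.Adj] : ℝ :=
  ((eigMultiset G).sort (· ≤ ·)).getD (((eigMultiset G).sort (· ≤ ·)).length - 2) 0

/-- The largest adjacency eigenvalue (spectral radius) of a finite simple graph. -/
noncomputable def largestEigenvalue {V : Type*} [Fintype V] [DecidableEq V]
    (G : SimpleGraph V) [DecidableRel G.Adj] : ℝ :=
  ((eigMultiset G).sort (· ≤ ·)).getD (((eigMultiset G).sort (· ≤ ·)).length - 1) 0

/-- The orthogonal polynomials `F_i^{(k)}`. -/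
noncomputable def Fpoly (k : ℕ) : ℕ → Polynomial ℝ
  | 0 => 1
  | 1 => X
  | 2 => X ^ 2 - C (k : ℝ)
  | n + 3 => X * Fpoly k (n + 2) - C ((k : ℝ) - 1) * Fpoly k (n + 1)

/-- `G_i = Σ_{j=0}^i F_j`. -/
noncomputable def Gpoly (k : ℕ) (i : ℕ) : Polynomial ℝ :=
  ∑ j ∈ Finset.range (i + 1), Fpoly k j

/-- The tridiagonal matrix `T(k,t,c)`: superdiagonal `(k, k-1, …, k-1)`,
subdiagonal `(1, …, 1, c)`, diagonal chosen so that every row sums to `k`. -/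
noncomputable def Tmat (k t : ℕ) (c : ℝ) : Matrix (Fin t) (Fin t) ℝ :=
  Matrix.of fun i j =>
    if (j : ℕ) = (i : ℕ) + 1 then (if (i : ℕ) = 0 then (k : ℝ) else (k : ℝ) - 1)
    else if (i : ℕ) = (j : ℕ) + 1 then (if (i : ℕ) = t - 1 then c else 1)
    else if i = j then
      (k : ℝ) - (if (i : ℕ) + 1 < t then (if (i : ℕ) = 0 then (k : ℝ) else (k : ℝ) - 1) else 0)
        - (if 0 < (i : ℕ) then (if (i : ℕ) = t - 1 then c else 1) else 0)
    else 0

/-- `M(k,t,c) = 1 + Σ_{i=0}^{t-3} k (k-1)^i + k (k-1)^{t-2} / c`. -/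
noncomputable def Mbound (k t : ℕ) (c : ℝ) : ℝ :=
  1 + (∑ i ∈ Finset.range (t - 2), (k : ℝ) * ((k : ℝ) - 1) ^ i)
    + (k : ℝ) * ((k : ℝ) - 1) ^ (t - 2) / c


section Helpers
open Matrix

variable {V : Type*} [Fintype V] [DecidableEq V]

lemma my_aeval_diagonal (d : V → ℝ) (p : ℝ[X]) :
    aeval (Matrix.diagonal d) p = Matrix.diagonal (fun i => p.eval (d i)) := by
  induction p using Polynomial.induction_on' with
  | add p q hp hq => simp [hp, hq, Matrix.diagonal_add]
  | monomial n c =>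
      simp [aeval_monomial, eval_monomial, Matrix.diagonal_pow,
        Matrix.algebraMap_eq_diagonal, Matrix.diagonal_mul_diagonal]

lemma my_conj_pow (U Ui D : Matrix V V ℝ) (h : Ui * U = 1) (h2 : U * Ui = 1) (n : ℕ) :
    (U * D * Ui) ^ n = U * D ^ n * Ui := by
  induction n with
  | zero => rw [pow_zero, pow_zero, Matrix.mul_one, h2]
  | succ n ih =>
      rw [pow_succ, pow_succ, ih]
      calc U * D ^ n * Ui * (U * D * Ui) = U * D ^ n * (Ui * U) * D * Ui := by
            simp only [Matrix.mul_assoc]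
        _ = U * (D ^ n * D) * Ui := by rw [h, Matrix.mul_one]; simp only [Matrix.mul_assoc]

lemma my_aeval_conj (U Ui D : Matrix V V ℝ) (h : Ui * U = 1) (h2 : U * Ui = 1) (p : ℝ[X]) :
    aeval (U * D * Ui) p = U * aeval D p * Ui := by
  induction p using Polynomial.induction_on' with
  | add p q hp hq => simp [hp, hq, Matrix.mul_add, Matrix.add_mul]
  | monomial n c =>
      rw [aeval_monomial, aeval_monomial, my_conj_pow U Ui D h h2]
      simp only [← Algebra.smul_def, Matrix.mul_smul, Matrix.smul_mul]

example : True := trivial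

lemma my_trace_aeval (A : Matrix V V ℝ) (hA : A.IsHermitian) (p : ℝ[X]) :
    (aeval A p).trace = ∑ i, p.eval (hA.eigenvalues i) := by
  set U := (hA.eigenvectorUnitary : Matrix V V ℝ) with hU
  set Ui := (star hA.eigenvectorUnitary : Matrix V V ℝ) with hUi
  have h : Ui * U = 1 := hA.eigenvectorUnitary.2.1
  have h2 : U * Ui = 1 := hA.eigenvectorUnitary.2.2
  have hdiag : Matrix.diagonal (RCLike.ofReal ∘ hA.eigenvalues) = Matrix.diagonal hA.eigenvalues := by
    congr 1
  have hspec : A = U * Matrix.diagonal hA.eigenvalues * Ui := by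
    rw [hU, hUi, ← hdiag]; exact hA.spectral_theorem
  have key : aeval A p = U * aeval (Matrix.diagonal hA.eigenvalues) p * Ui := by
    conv_lhs => rw [hspec]
    exact my_aeval_conj U Ui _ h h2 p
  rw [key, my_aeval_diagonal,
    Matrix.trace_mul_cycle, h, Matrix.one_mul, Matrix.trace_diagonal]

lemma eigvec_const (k : ℕ) (G : SimpleGraph V) [DecidableRel G.Adj]
    (hconn : G.Connected) (hreg : G.IsRegularOfDegree k)
    (x : V → ℝ) (hx : G.adjMatrix ℝ *ᵥ x = (k : ℝ) • x) :
    ∀ u v : V, x u = x v := by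
  have : Nonempty V := hconn.nonempty
  obtain ⟨u₀, -, hmax⟩ := Finset.exists_max_image Finset.univ x ⟨Classical.arbitrary V, Finset.mem_univ _⟩
  have hmax' : ∀ v, x v ≤ x u₀ := fun v => hmax v (Finset.mem_univ v)
  have hsum : ∀ a : V, ∑ w ∈ G.neighborFinset a, x w = (k : ℝ) * x a := by
    intro a
    have := congrFun hx a
    rwa [SimpleGraph.adjMatrix_mulVec_apply, Pi.smul_apply, smul_eq_mul] at this
  have step : ∀ a b : V, G.Adj a b → x a = x u₀ → x b = x u₀ := by
    intro a b hab ha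
    by_contra hne
    have hlt : x b < x u₀ := lt_of_le_of_ne (hmax' b) hne
    have h1 : ∑ w ∈ G.neighborFinset a, x w < ∑ w ∈ G.neighborFinset a, x u₀ :=
      Finset.sum_lt_sum (fun w _ => hmax' w)
        ⟨b, (G.mem_neighborFinset a b).2 hab, hlt⟩
    have hc : (G.neighborFinset a).card = k := hreg a
    rw [hsum a, ha, Finset.sum_const, hc, nsmul_eq_mul] at h1
    exact lt_irrefl _ h1
  have aux : ∀ (a b : V) (w : G.Walk a b), x a = x u₀ → x b = x u₀ := by
    intro a b w
    induction w with
    | nil => exact id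
    | cons h p ih => exact fun ha => ih (step _ _ h ha)
  have hall : ∀ v, x v = x u₀ := fun v => aux u₀ v (hconn u₀ v).some rfl
  intro u v; rw [hall u, hall v]

lemma eig_k_unique (k : ℕ) (G : SimpleGraph V) [DecidableRel G.Adj]
    (hconn : G.Connected) (hreg : G.IsRegularOfDegree k)
    (hA : (G.adjMatrix ℝ).IsHermitian)
    (i j : V) (hi : hA.eigenvalues i = k) (hj : hA.eigenvalues j = k) : i = j := by
  have : Nonempty V := hconn.nonempty
  by_contra hne
  set v1 : V → ℝ := ⇑(hA.eigenvectorBasis i) with hv1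
  set v2 : V → ℝ := ⇑(hA.eigenvectorBasis j) with hv2
  have h1 : G.adjMatrix ℝ *ᵥ v1 = (k : ℝ) • v1 := by
    have := hA.mulVec_eigenvectorBasis i; rwa [hi] at this
  have h2 : G.adjMatrix ℝ *ᵥ v2 = (k : ℝ) • v2 := by
    have := hA.mulVec_eigenvectorBasis j; rwa [hj] at this
  have c1 := eigvec_const k G hconn hreg v1 h1
  have c2 := eigvec_const k G hconn hreg v2 h2
  have horth : (inner (𝕜 := ℝ) (hA.eigenvectorBasis i) (hA.eigenvectorBasis j)) = 0 :=
    hA.eigenvectorBasis.orthonormal.2 hne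
  rw [PiLp.inner_apply] at horth
  simp only [RCLike.inner_apply, conj_trivial] at horth
  obtain ⟨u₀⟩ := ‹Nonempty V›
  have hsum : ∑ w : V, v1 w * v2 w = (Fintype.card V : ℝ) * (v1 u₀ * v2 u₀) := by
    rw [Finset.sum_congr rfl (fun w _ => by rw [c1 w u₀, c2 w u₀]), Finset.sum_const,
      nsmul_eq_mul, Fintype.card]
  have hcard : (0 : ℝ) < Fintype.card V := by
    exact_mod_cast Fintype.card_pos
  have hzero : v1 u₀ * v2 u₀ = 0 := by
    have h' : ∑ w : V, v1 w * v2 w = 0 :=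
      (Finset.sum_congr rfl fun w _ => mul_comm _ _).trans horth
    rw [hsum] at h'
    exact (mul_eq_zero.1 h').resolve_left (ne_of_gt hcard)
  rcases mul_eq_zero.1 hzero with h | h
  · have hv : v1 = 0 := funext fun w => (c1 w u₀).trans h
    exact hA.eigenvectorBasis.orthonormal.ne_zero i (by ext w; exact congrFun hv w)
  · have hv : v2 = 0 := funext fun w => (c2 w u₀).trans h
    exact hA.eigenvectorBasis.orthonormal.ne_zero j (by ext w; exact congrFun hv w)

lemma mySumCollapse {α : Type*} [Fintype α] [DecidableEq α] {P : α → Prop} [DecidablePred P]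
    {Q : Prop} [Decidable Q] (c : α)
    (h1 : ∀ e, P e → e = c) (h2 : P c ↔ Q) :
    ∑ e, (if P e then (1:ℝ) else 0) = if Q then 1 else 0 := by
  rw [Finset.sum_congr rfl (fun e _ => show (if P e then (1:ℝ) else 0)
      = if e = c then (if Q then 1 else 0) else 0 from by
    by_cases he : e = c
    · subst he; rw [if_pos rfl]; exact if_congr h2 rfl rfl
    · rw [if_neg he, if_neg (fun hp => he (h1 e hp))])]
  simp [Finset.sum_ite_eq']

def Smat (G : SimpleGraph V) [DecidableRel G.Adj] : Matrix V (V × V) ℝ :=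
  fun u e => if e.1 = u ∧ G.Adj e.1 e.2 then 1 else 0

def Tmat' (G : SimpleGraph V) [DecidableRel G.Adj] : Matrix (V × V) V ℝ :=
  fun e v => if e.2 = v ∧ G.Adj e.1 e.2 then 1 else 0

def Rmat (G : SimpleGraph V) [DecidableRel G.Adj] : Matrix V (V × V) ℝ :=
  fun u e => if e.2 = u ∧ G.Adj e.1 e.2 then 1 else 0

def Bmat (G : SimpleGraph V) [DecidableRel G.Adj] : Matrix (V × V) (V × V) ℝ :=
  fun e f => if G.Adj e.1 e.2 ∧ G.Adj f.1 f.2 ∧ f.1 = e.2 ∧ f.2 ≠ e.1 then 1 else 0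

def Jmat (G : SimpleGraph V) [DecidableRel G.Adj] : Matrix (V × V) (V × V) ℝ :=
  fun e f => if G.Adj e.1 e.2 ∧ G.Adj f.1 f.2 ∧ f.1 = e.2 ∧ f.2 = e.1 then 1 else 0

variable (G : SimpleGraph V) [DecidableRel G.Adj]

lemma hST : Smat G * Tmat' G = G.adjMatrix ℝ := by
  ext u v
  simp only [Matrix.mul_apply, Smat, Tmat', ite_zero_mul_ite_zero, mul_one]
  rw [mySumCollapse ((u, v) : V × V)
    (fun e hp => Prod.ext hp.1.1 hp.2.1) (by constructor <;> intro h <;> tauto)]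
  simp [SimpleGraph.adjMatrix]

lemma hTS : Tmat' G * Smat G = Bmat G + Jmat G := by
  ext e f
  simp only [Matrix.mul_apply, Tmat', Smat, ite_zero_mul_ite_zero, mul_one]
  rw [mySumCollapse e.2 (fun v hp => hp.1.1.symm)
    (show _ ↔ G.Adj e.1 e.2 ∧ G.Adj f.1 f.2 ∧ f.1 = e.2 by constructor <;> intro h <;> tauto)]
  simp only [Matrix.add_apply, Bmat, Jmat]
  by_cases h : G.Adj e.1 e.2 ∧ G.Adj f.1 f.2 ∧ f.1 = e.2
  · rw [if_pos h]
    by_cases h2 : f.2 = e.1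
    · rw [if_neg (fun hc => hc.2.2.2 h2), if_pos ⟨h.1, h.2.1, h.2.2, h2⟩]; norm_num
    · rw [if_pos ⟨h.1, h.2.1, h.2.2, h2⟩, if_neg (fun hc => h2 hc.2.2.2)]; norm_num
  · rw [if_neg h, if_neg (fun hc => h ⟨hc.1, hc.2.1, hc.2.2.1⟩),
      if_neg (fun hc => h ⟨hc.1, hc.2.1, hc.2.2.1⟩)]
    norm_num

lemma hSJ : Smat G * Jmat G = Rmat G := by
  ext u f
  simp only [Matrix.mul_apply, Smat, Jmat, ite_zero_mul_ite_zero, mul_one]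
  rw [mySumCollapse (Q := G.Adj f.1 f.2 ∧ f.2 = u) ((u, f.1) : V × V)
    (fun e hp => Prod.ext hp.1.1 hp.2.2.2.1.symm)
    (by
      constructor
      · exact fun h => ⟨h.2.2.1, h.2.2.2.2⟩
      · intro h
        have hadj : G.Adj u f.1 := (h.2 ▸ h.1 : G.Adj f.1 u).symm
        exact ⟨⟨rfl, hadj⟩, hadj, h.1, rfl, h.2⟩)]
  simp only [Rmat]
  exact if_congr and_comm rfl rfl

lemma hRT (k : ℕ) (hreg : G.IsRegularOfDegree k) : Rmat G * Tmat' G = (k : ℝ) • 1 := by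
  ext u v
  simp only [Matrix.mul_apply, Rmat, Tmat', ite_zero_mul_ite_zero, mul_one]
  by_cases huv : u = v
  · subst huv
    rw [Fintype.sum_prod_type]
    rw [Finset.sum_congr rfl (fun x _ => mySumCollapse (Q := G.Adj x u) u
      (fun y (hy : ((x, y).2 = u ∧ G.Adj x y) ∧ ((x, y).2 = u ∧ G.Adj x y)) => hy.1.1)
      (by constructor <;> intro h <;> tauto))]
    rw [Finset.sum_boole]
    have hfil : Finset.filter (fun x => G.Adj x u) Finset.univ = G.neighborFinset u := by
      ext x
      simp only [Finset.mem_filter, Finset.mem_univ, true_and, SimpleGraph.mem_neighborFinset]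
      exact G.adj_comm x u
    rw [hfil]
    have : (G.neighborFinset u).card = k := hreg u
    rw [this]
    simp [Matrix.smul_apply, Matrix.one_apply_eq]
  · rw [Finset.sum_congr rfl (fun e _ => if_neg
      (fun hp : (e.2 = u ∧ G.Adj e.1 e.2) ∧ (e.2 = v ∧ G.Adj e.1 e.2) =>
        huv (hp.1.1.symm.trans hp.2.1)))]
    simp [Matrix.smul_apply, Matrix.one_apply_ne huv]

lemma hRB (k : ℕ) (hk : 1 ≤ k) (hreg : G.IsRegularOfDegree k) :
    Rmat G * Bmat G = ((k : ℝ) - 1) • Smat G := by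
  ext u f
  simp only [Matrix.mul_apply, Rmat, Bmat, ite_zero_mul_ite_zero, mul_one]
  by_cases hf : G.Adj f.1 f.2 ∧ f.1 = u
  · rw [Fintype.sum_prod_type]
    rw [Finset.sum_congr rfl (fun x _ => mySumCollapse (Q := G.Adj x u ∧ f.2 ≠ x) u
      (fun y (hy : ((x, y).2 = u ∧ G.Adj x y) ∧ G.Adj x y ∧ G.Adj f.1 f.2 ∧ f.1 = (x, y).2 ∧ f.2 ≠ x) => hy.1.1)
      (⟨fun h => ⟨h.1.2, h.2.2.2.2⟩, fun h => ⟨⟨rfl, h.1⟩, h.1, hf.1, hf.2, h.2⟩⟩))]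
    rw [Finset.sum_boole]
    have hfil : Finset.filter (fun x => G.Adj x u ∧ f.2 ≠ x) Finset.univ
        = (G.neighborFinset u).erase f.2 := by
      ext x
      simp only [Finset.mem_filter, Finset.mem_univ, true_and, Finset.mem_erase,
        SimpleGraph.mem_neighborFinset]
      exact ⟨fun h => ⟨h.2.symm, h.1.symm⟩, fun h => ⟨h.2.symm, h.1.symm⟩⟩
    rw [hfil]
    have hmem : f.2 ∈ G.neighborFinset u := by
      rw [SimpleGraph.mem_neighborFinset]
      exact hf.2 ▸ hf.1
    rw [Finset.card_erase_of_mem hmem]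
    have hcard : (G.neighborFinset u).card = k := hreg u
    rw [hcard, Nat.cast_sub hk, Nat.cast_one]
    simp only [Matrix.smul_apply, Smat, smul_eq_mul]
    rw [if_pos ⟨hf.2, hf.1⟩, mul_one]
  · rw [Finset.sum_congr rfl (fun e _ => if_neg
      (fun hp : (e.2 = u ∧ G.Adj e.1 e.2) ∧ G.Adj e.1 e.2 ∧ G.Adj f.1 f.2 ∧ f.1 = e.2 ∧ f.2 ≠ e.1 =>
        hf ⟨hp.2.2.1, hp.2.2.2.1.trans hp.1.1⟩))]
    simp only [Finset.sum_const_zero, Matrix.smul_apply, Smat, smul_eq_mul]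
    rw [if_neg (fun hc => hf ⟨hc.2, hc.1⟩), mul_zero]

lemma matmul_nonneg {l m n : Type*} [Fintype m] (P : Matrix l m ℝ) (Q : Matrix m n ℝ)
    (hP : ∀ i j, 0 ≤ P i j) (hQ : ∀ i j, 0 ≤ Q i j) : ∀ i j, 0 ≤ (P * Q) i j := by
  intro i j
  rw [Matrix.mul_apply]
  exact Finset.sum_nonneg fun e _ => mul_nonneg (hP i e) (hQ e j)

lemma key (k : ℕ) (hk : 1 ≤ k) (hreg : G.IsRegularOfDegree k) :
    ∀ i, aeval (G.adjMatrix ℝ) (Fpoly k (i + 1)) = Smat G * Bmat G ^ i * Tmat' G := by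
  set A := G.adjMatrix ℝ with hA
  intro i
  induction i using Nat.twoStepInduction with
  | zero =>
      rw [pow_zero, Matrix.mul_one, hST]
      show aeval A X = A
      rw [aeval_X]
  | one =>
      have hB : Bmat G = Tmat' G * Smat G - Jmat G := eq_sub_of_add_eq (hTS G).symm
      have lhs : aeval A (Fpoly k 2) = A * A - (k : ℝ) • 1 := by
        show aeval A (X ^ 2 - C (k : ℝ)) = _
        rw [map_sub, aeval_C, map_pow, aeval_X, Algebra.algebraMap_eq_smul_one, sq]
      rw [lhs, pow_one, hB]
      rw [Matrix.mul_sub, Matrix.sub_mul, hSJ, hRT G k hreg]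
      rw [← Matrix.mul_assoc, Matrix.mul_assoc (Smat G * Tmat' G), hST]
  | more n ih1 ih2 =>
      have ih2' : aeval A (Fpoly k (n + 2)) = Smat G * Bmat G ^ (n + 1) * Tmat' G := ih2
      have lhs : aeval A (Fpoly k (n + 3))
          = A * (Smat G * Bmat G ^ (n + 1) * Tmat' G)
            - ((k : ℝ) - 1) • (Smat G * Bmat G ^ n * Tmat' G) := by
        show aeval A (X * Fpoly k (n + 2) - C ((k : ℝ) - 1) * Fpoly k (n + 1)) = _
        rw [map_sub, _root_.map_mul, _root_.map_mul, aeval_X, aeval_C, ih1, ih2',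
          ← Algebra.smul_def]
      rw [lhs]
      have main : A * (Smat G * Bmat G ^ (n + 1) * Tmat' G)
          = Smat G * Bmat G ^ (n + 2) * Tmat' G
            + ((k : ℝ) - 1) • (Smat G * Bmat G ^ n * Tmat' G) := by
        have h1 : Bmat G * Bmat G ^ (n + 1) = Bmat G ^ (n + 2) := (pow_succ' _ _).symm
        have h2 : Jmat G * Bmat G ^ (n + 1) = Jmat G * (Bmat G * Bmat G ^ n) := by
          rw [← pow_succ']
        have h3 : Smat G * (Jmat G * (Bmat G * Bmat G ^ n)) * Tmat' G
            = ((Smat G * Jmat G) * Bmat G) * Bmat G ^ n * Tmat' G := by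
          simp only [Matrix.mul_assoc]
        calc A * (Smat G * Bmat G ^ (n + 1) * Tmat' G)
            = (Smat G * Tmat' G) * (Smat G * Bmat G ^ (n + 1) * Tmat' G) := by rw [hST]
          _ = Smat G * ((Tmat' G * Smat G) * Bmat G ^ (n + 1)) * Tmat' G := by
              simp only [Matrix.mul_assoc]
          _ = Smat G * ((Bmat G + Jmat G) * Bmat G ^ (n + 1)) * Tmat' G := by rw [hTS]
          _ = Smat G * (Bmat G * Bmat G ^ (n + 1)) * Tmat' G
              + Smat G * (Jmat G * Bmat G ^ (n + 1)) * Tmat' G := by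
              rw [Matrix.add_mul, Matrix.mul_add, Matrix.add_mul]
          _ = Smat G * Bmat G ^ (n + 2) * Tmat' G
              + ((Smat G * Jmat G) * Bmat G) * Bmat G ^ n * Tmat' G := by
              rw [h1, h2, h3]
          _ = Smat G * Bmat G ^ (n + 2) * Tmat' G
              + ((k : ℝ) - 1) • (Smat G * Bmat G ^ n * Tmat' G) := by
              rw [hSJ, hRB G k hk hreg, Matrix.smul_mul, Matrix.smul_mul]
      show A * (Smat G * Bmat G ^ (n + 1) * Tmat' G)
          - ((k : ℝ) - 1) • (Smat G * Bmat G ^ n * Tmat' G)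
          = Smat G * Bmat G ^ (n + 2) * Tmat' G
      rw [main, add_sub_cancel_right]

lemma FA_nonneg (k : ℕ) (hk : 1 ≤ k) (hreg : G.IsRegularOfDegree k) (i : ℕ) :
    ∀ u v, 0 ≤ (aeval (G.adjMatrix ℝ) (Fpoly k (i + 1))) u v := by
  have hS : ∀ u e, 0 ≤ Smat G u e := fun u e => by
    dsimp [Smat]; split_ifs <;> norm_num
  have hT : ∀ e v, 0 ≤ Tmat' G e v := fun e v => by
    dsimp [Tmat']; split_ifs <;> norm_num
  have hBp : ∀ (j : ℕ) (e f : V × V), 0 ≤ (Bmat G ^ j) e f := by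
    intro j
    induction j with
    | zero =>
        intro e f
        rw [pow_zero]
        by_cases h : e = f
        · rw [h, Matrix.one_apply_eq]; norm_num
        · rw [Matrix.one_apply_ne h]
    | succ n ih =>
        rw [pow_succ]
        exact matmul_nonneg _ _ ih (fun e f => by dsimp [Bmat]; split_ifs <;> norm_num)
  rw [key G k hk hreg i]
  exact matmul_nonneg _ _ (matmul_nonneg _ _ hS (hBp i)) hT

end Helpers

theorem stmt2 {V : Type*} [Fintype V] [DecidableEq V] (k : ℕ) (hk : 2 ≤ k)
    (G : SimpleGraph V) [DecidableRel G.Adj]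
    (hconn : G.Connected) (hreg : G.IsRegularOfDegree k)
    (m : ℕ) (a : ℕ → ℝ) (f : Polynomial ℝ)
    (hf : f = ∑ i ∈ Finset.range (m + 1), C (a i) * Fpoly k i)
    (hfk : 0 < f.eval (k : ℝ))
    (hfneg : ∀ μ ∈ Finset.image (adjMatrix_isHermitian G).eigenvalues Finset.univ,
        μ ≠ (k : ℝ) → f.eval μ ≤ 0)
    (ha0 : 0 < a 0) (hai : ∀ i, 1 ≤ i → 0 ≤ a i) :
    (Fintype.card V : ℝ) ≤ f.eval (k : ℝ) / a 0 := by
  classical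
  set A := G.adjMatrix ℝ with hAdef
  have hA : A.IsHermitian := adjMatrix_isHermitian G
  have hk1 : 1 ≤ k := le_trans one_le_two hk
  -- trace of aeval f as sum over basis polynomials
  have h1 : (aeval A f).trace
      = ∑ i ∈ Finset.range (m + 1), a i * (aeval A (Fpoly k i)).trace := by
    rw [hf, map_sum, Matrix.trace_sum]
    refine Finset.sum_congr rfl fun i _ => ?_
    rw [_root_.map_mul, aeval_C, ← Algebra.smul_def, Matrix.trace_smul, smul_eq_mul]
  have htr0 : (aeval A (Fpoly k 0)).trace = (Fintype.card V : ℝ) := by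
    show (aeval A (1 : Polynomial ℝ)).trace = _
    rw [map_one, Matrix.trace_one]
  have htrpos : ∀ i : ℕ, 0 ≤ (aeval A (Fpoly k (i + 1))).trace := by
    intro i
    exact Finset.sum_nonneg fun u _ => FA_nonneg G k hk1 hreg i u u
  have h2 : a 0 * (Fintype.card V : ℝ) ≤ (aeval A f).trace := by
    rw [h1, Finset.sum_range_succ']
    rw [htr0]
    have : 0 ≤ ∑ i ∈ Finset.range m, a (i + 1) * (aeval A (Fpoly k (i + 1))).trace :=
      Finset.sum_nonneg fun i _ =>
        mul_nonneg (hai (i + 1) (Nat.le_add_left 1 i)) (htrpos i)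
    linarith
  have h3 : (aeval A f).trace = ∑ j : V, f.eval (hA.eigenvalues j) :=
    my_trace_aeval A hA f
  have h4 : ∑ j : V, f.eval (hA.eigenvalues j) ≤ f.eval (k : ℝ) := by
    rw [← Finset.sum_filter_add_sum_filter_not Finset.univ
      (fun j => hA.eigenvalues j = (k : ℝ))]
    have hcard : (Finset.univ.filter (fun j => hA.eigenvalues j = (k : ℝ))).card ≤ 1 := by
      refine Finset.card_le_one.2 fun i hi j hj => ?_
      exact eig_k_unique k G hconn hreg hA i j
        ((Finset.mem_filter.1 hi).2) ((Finset.mem_filter.1 hj).2)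
    have hsum1 : ∑ j ∈ Finset.univ.filter (fun j => hA.eigenvalues j = (k : ℝ)),
        f.eval (hA.eigenvalues j) ≤ f.eval (k : ℝ) := by
      rw [Finset.sum_congr rfl (fun j hj => by
        rw [(Finset.mem_filter.1 hj).2]), Finset.sum_const, nsmul_eq_mul]
      calc ((Finset.univ.filter (fun j => hA.eigenvalues j = (k : ℝ))).card : ℝ)
            * f.eval (k : ℝ) ≤ 1 * f.eval (k : ℝ) := by
            exact mul_le_mul_of_nonneg_right (by exact_mod_cast hcard) hfk.le
        _ = f.eval (k : ℝ) := one_mul _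
    have hsum2 : ∑ j ∈ Finset.univ.filter (fun j => ¬(hA.eigenvalues j = (k : ℝ))),
        f.eval (hA.eigenvalues j) ≤ 0 := by
      refine Finset.sum_nonpos fun j hj => ?_
      refine hfneg (hA.eigenvalues j) ?_ ((Finset.mem_filter.1 hj).2)
      exact Finset.mem_image.2 ⟨j, Finset.mem_univ j, rfl⟩
    linarith
  rw [le_div_iff₀ ha0]
  calc (Fintype.card V : ℝ) * a 0 = a 0 * (Fintype.card V : ℝ) := mul_comm _ _
    _ ≤ (aeval A f).trace := h2
    _ = ∑ j : V, f.eval (hA.eigenvalues j) := h3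
    _ ≤ f.eval (k : ℝ) := h4
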